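/- arXiv:1610.07508 — 7 statements merged into one kernel-verified Lean document; each statement's English description precedes it below -/
import Mathlib

section
/- Let X be a compact Hausdorff space and (g_α) an almost non-increasing net of upper semicontinuous real-valued functions on X converging pointwise to g. Then sup_X g_α converges to sup_X g. -/
open Filter Topology

lemma usc_bddAbove_range {X : Type*} [TopologicalSpace X] [CompactSpace X]
    {f : X → ℝ} (hf : UpperSemicontinuous f) : BddAbove (Set.range f) := by
  obtain ⟨t, ht⟩ := IsCompact.elim_finite_subcover isCompact_univ
    (fun n : ℕ => f ⁻¹' Set.Iio n) (fun n => hf.isOpen_preimage n)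
    (fun x _ => by
      obtain ⟨n, hn⟩ := exists_nat_gt (f x)
      exact Set.mem_iUnion.2 ⟨n, hn⟩)
  obtain ⟨B, hB⟩ := t.bddAbove
  refine ⟨B, ?_⟩
  rintro y ⟨x, rfl⟩
  obtain ⟨n, hn, hx⟩ := Set.mem_iUnion₂.1 (ht (Set.mem_univ x))
  exact le_trans (le_of_lt hx) ((Nat.cast_le.2 <| by exact_mod_cast hB hn : (n:ℝ) ≤ B))

/-- Generalized Dini theorem: for an almost non-increasing net of upper
semicontinuous functions on a compact Hausdorff space converging pointwise,
the suprema converge to the supremum of the limit. -/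
theorem sup_tendsto_of_almost_nonincreasing {ι X : Type*} [Preorder ι]
    [IsDirected ι (· ≤ ·)] [Nonempty ι] [TopologicalSpace X] [T2Space X]
    [CompactSpace X] [Nonempty X]
    (g : ι → X → ℝ) (glim : X → ℝ)
    (hmon : ∀ ε : ℝ, 0 < ε → ∃ A : ι, ∀ α α' : ι, A ≤ α → α ≤ α' →
      ∀ x : X, g α' x - ε ≤ g α x)
    (husc : ∀ α, UpperSemicontinuous (g α))
    (hlim : ∀ x, Tendsto (fun α => g α x) atTop (𝓝 (glim x))) :
    Tendsto (fun α => ⨆ x, g α x) atTop (𝓝 (⨆ x, glim x)) := by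
  classical
  set S := ⨆ x, glim x with hS
  rw [Metric.tendsto_nhds]
  intro ε hε
  obtain ⟨A, hA⟩ := hmon (ε/3) (by linarith)
  -- glim x ≤ g α x + ε/3 for all α ≥ A
  have key : ∀ α, A ≤ α → ∀ x, glim x ≤ g α x + ε/3 := by
    intro α hα x
    refine le_of_tendsto (hlim x) ?_
    filter_upwards [eventually_ge_atTop α] with α' hα'
    linarith [hA α α' hα hα' x]
  have hbddlim : BddAbove (Set.range glim) := by
    obtain ⟨B, hB⟩ := usc_bddAbove_range (husc A)
    refine ⟨B + ε/3, ?_⟩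
    rintro y ⟨x, rfl⟩
    exact le_trans (key A le_rfl x) (by linarith [hB (Set.mem_range_self (f := g A) x)])
  have hglim_le : ∀ x, glim x ≤ S := fun x => le_ciSup hbddlim x
  -- for each x pick α_x ≥ A with g α_x x < S + ε/3
  have hpick : ∀ x : X, ∃ a : ι, A ≤ a ∧ g a x < S + ε/3 := by
    intro x
    have h1 : ∀ᶠ a in atTop, dist (g a x) (glim x) < ε/3 :=
      (hlim x) (Metric.ball_mem_nhds _ (by linarith))
    have := (h1.and (eventually_ge_atTop A)).exists
    obtain ⟨a, hd, hAa⟩ := this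
    refine ⟨a, hAa, ?_⟩
    have := abs_sub_lt_iff.1 (by simpa [Real.dist_eq] using hd)
    have := hglim_le x
    linarith [this, this]
  choose a hAa ha using hpick
  -- open cover
  obtain ⟨t, ht⟩ := IsCompact.elim_finite_subcover isCompact_univ
    (fun x : X => g (a x) ⁻¹' Set.Iio (S + ε/3))
    (fun x => (husc (a x)).isOpen_preimage _)
    (fun x _ => Set.mem_iUnion.2 ⟨x, ha x⟩)
  obtain ⟨β, hβ⟩ := (insert A (t.image a)).exists_le
  have hAβ : A ≤ β := hβ A (Finset.mem_insert_self _ _)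
  filter_upwards [eventually_ge_atTop β] with α hα
  have hub : ∀ y, g α y ≤ S + 2*ε/3 := by
    intro y
    obtain ⟨x, hx, hy⟩ := Set.mem_iUnion₂.1 (ht (Set.mem_univ y))
    have haβ : a x ≤ β := hβ _ (Finset.mem_insert_of_mem (Finset.mem_image_of_mem a hx))
    have := hA (a x) α (hAa x) (le_trans haβ hα) y
    have : g α y - ε/3 ≤ g (a x) y := this
    have hy' : g (a x) y < S + ε/3 := hy
    linarith
  have hsup_le : (⨆ y, g α y) ≤ S + 2*ε/3 := ciSup_le hub
  have hge : S - ε/3 ≤ ⨆ y, g α y := by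
    have hbdd : BddAbove (Set.range (g α)) := ⟨S + 2*ε/3, by rintro y ⟨x, rfl⟩; exact hub x⟩
    refine sub_le_iff_le_add.2 (ciSup_le fun x => ?_)
    have := key α (le_trans hAβ hα) x
    have h2 : g α x ≤ ⨆ y, g α y := le_ciSup hbdd x
    linarith
  rw [Real.dist_eq, abs_sub_lt_iff]
  constructor <;> linarith
end

section
/- A net (z_α) in a metric space (X,d) with basepoint b is an almost geodesic if and only if the net of functions φ_{z_α}(·) := d(·, z_α) − d(b, z_α) is almost non-increasing. -/
open Filter Topology

/-- A net in a metric space is an almost geodesic iff the associated net of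
functions `d(·, z_α) − d(b, z_α)` is almost non-increasing. -/
theorem almost_geodesic_iff_almost_nonincreasing {ι X : Type*} [Preorder ι]
    [MetricSpace X] (z : ι → X) (b : X) :
    (∀ ε : ℝ, 0 < ε → ∃ A : ι, ∀ α α' : ι, A ≤ α → α ≤ α' →
        dist b (z α) + dist (z α) (z α') - ε ≤ dist b (z α')) ↔
    (∀ ε : ℝ, 0 < ε → ∃ A : ι, ∀ α α' : ι, A ≤ α → α ≤ α' →
        ∀ x : X, (dist x (z α') - dist b (z α')) - ε ≤ dist x (z α) - dist b (z α)) := by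
  constructor
  · intro h ε hε
    obtain ⟨A, hA⟩ := h ε hε
    refine ⟨A, fun α α' h1 h2 x => ?_⟩
    have h3 := hA α α' h1 h2
    have h4 := dist_triangle x (z α) (z α')
    linarith
  · intro h ε hε
    obtain ⟨A, hA⟩ := h ε hε
    refine ⟨A, fun α α' h1 h2 => ?_⟩
    have h3 := hA α α' h1 h2 (z α)
    simp only [dist_self] at h3
    have := dist_comm (z α') (z α)
    linarith
end

section
/- Let (z_α) be an almost geodesic net in a complete metric space (X,d) with basepoint b. If the net d(b, z_α) is bounded, then (z_α) converges to a point of X. -/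
open Filter Topology

/-- A bounded almost geodesic in a complete metric space converges. -/
theorem almost_geodesic_bounded_converges {ι X : Type*} [Preorder ι]
    [IsDirected ι (· ≤ ·)] [Nonempty ι] [MetricSpace X] [CompleteSpace X]
    (z : ι → X) (b : X)
    (hgeo : ∀ ε : ℝ, 0 < ε → ∃ A : ι, ∀ α α' : ι, A ≤ α → α ≤ α' →
        dist b (z α) + dist (z α) (z α') - ε ≤ dist b (z α'))
    (hbdd : ∃ M : ℝ, ∀ α, dist b (z α) ≤ M) :
    ∃ p : X, Tendsto z atTop (𝓝 p) := by
  obtain ⟨M, hM⟩ := hbdd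
  -- show the pushed-forward filter is Cauchy
  have hc : Cauchy (Filter.map z atTop) := by
    rw [Metric.cauchy_iff]
    refine ⟨Filter.map_neBot, fun ε hε => ?_⟩
    have hδ : (0:ℝ) < ε / 6 := by linarith
    obtain ⟨A, hA⟩ := hgeo (ε / 6) hδ
    set f : ι → ℝ := fun α => dist b (z α) with hf
    set s : ℝ := sSup (f '' Set.Ici A) with hs
    have hne : (f '' Set.Ici A).Nonempty := ⟨f A, A, le_refl A, rfl⟩
    have hbd : BddAbove (f '' Set.Ici A) := by
      refine ⟨M, ?_⟩
      rintro y ⟨α, -, rfl⟩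
      exact hM α
    obtain ⟨y, ⟨α0, hα0A, rfl⟩, hy⟩ := exists_lt_of_lt_csSup hne (show s - ε/6 < s by linarith)
    -- key estimate: for α0 ≤ α ≤ β, dist (z α) (z β) < 3·(ε/6)
    have key : ∀ α β, α0 ≤ α → α ≤ β → dist (z α) (z β) < 3 * (ε / 6) := by
      intro α β h1 h2
      have hAα : A ≤ α := le_trans hα0A h1
      have hfβ : f β ≤ s := le_csSup hbd ⟨β, le_trans hAα h2, rfl⟩
      have hfα : s - 2 * (ε/6) < f α := by
        have := hA α0 α hα0A h1
        have hd : (0:ℝ) ≤ dist (z α0) (z α) := dist_nonneg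
        simp only [hf] at *
        linarith
      have := hA α β hAα h2
      simp only [hf] at *
      linarith
    refine ⟨z '' Set.Ici α0, Filter.image_mem_map (Filter.mem_atTop α0), ?_⟩
    rintro x ⟨α, hα, rfl⟩ y' ⟨α', hα', rfl⟩
    obtain ⟨β, hβ1, hβ2⟩ := directed_of (· ≤ ·) α α'
    calc dist (z α) (z α') ≤ dist (z α) (z β) + dist (z β) (z α') := dist_triangle _ _ _
      _ = dist (z α) (z β) + dist (z α') (z β) := by rw [dist_comm (z β)]
      _ < 3 * (ε/6) + 3 * (ε/6) := add_lt_add (key α β hα hβ1) (key α' β hα' hβ2)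
      _ = ε := by ring
  obtain ⟨p, hp⟩ := CompleteSpace.complete hc
  exact ⟨p, hp⟩
end

section
/- Let μ, μ₁, μ₂ be signed regular Borel measures on a compact Hausdorff space K with total variation norms ‖μ₁‖ ≤ 1, ‖μ₂‖ ≤ 1, and suppose μ = (1−λ)μ₁ + λμ₂ for some λ ∈ (0,1) and ‖μ‖ = 1. Then ‖μ₁‖ = ‖μ₂‖ = 1, and the Jordan decompositions satisfy μ⁺ = (1−λ)μ₁⁺ + λμ₂⁺ and μ⁻ = (1−λ)μ₁⁻ + λμ₂⁻. -/
open MeasureTheory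

/-- Minimality of the Jordan decomposition: if `s E = μ E - ν E` for all measurable `E`,
then the positive part of `s` is dominated by `μ`. -/
lemma posPart_le_of_repr {α : Type*} [MeasurableSpace α] (s : SignedMeasure α)
    (μ ν : Measure α) [IsFiniteMeasure μ] [IsFiniteMeasure ν]
    (h : ∀ E, MeasurableSet E → s E = (μ E).toReal - (ν E).toReal) :
    s.toJordanDecomposition.posPart ≤ μ := by
  rw [Measure.le_iff]
  obtain ⟨i, hi₁, hi₂, hi₃, hpos, hneg⟩ := s.toJordanDecomposition_spec
  intro E hE
  rw [hpos, SignedMeasure.toMeasureOfZeroLE_apply _ hi₂ hi₁ hE]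
  have h1 : s (i ∩ E) ≤ (μ E).toReal := by
    rw [h (i ∩ E) (hi₁.inter hE)]
    have hle : μ (i ∩ E) ≤ μ E := measure_mono Set.inter_subset_right
    have := ENNReal.toReal_mono (measure_ne_top μ E) hle
    have hν : (0:ℝ) ≤ (ν (i ∩ E)).toReal := ENNReal.toReal_nonneg
    linarith
  have h2 : ENNReal.ofReal (s (i ∩ E)) ≤ μ E :=
    calc ENNReal.ofReal (s (i ∩ E)) ≤ ENNReal.ofReal (μ E).toReal :=
          ENNReal.ofReal_le_ofReal h1
      _ = μ E := ENNReal.ofReal_toReal (measure_ne_top μ E)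
  refine le_trans (le_of_eq ?_) h2
  rw [← ENNReal.ofReal_coe_nnreal]
  rfl

lemma negPart_le_of_repr {α : Type*} [MeasurableSpace α] (s : SignedMeasure α)
    (μ ν : Measure α) [IsFiniteMeasure μ] [IsFiniteMeasure ν]
    (h : ∀ E, MeasurableSet E → s E = (μ E).toReal - (ν E).toReal) :
    s.toJordanDecomposition.negPart ≤ ν := by
  have key : (-s).toJordanDecomposition.posPart ≤ ν := by
    refine posPart_le_of_repr (-s) ν μ fun E hE => ?_
    rw [VectorMeasure.neg_apply, h E hE]; ring
  rwa [SignedMeasure.toJordanDecomposition_neg, JordanDecomposition.neg_posPart] at key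

/-- If `μ = (1−λ)μ₁ + λμ₂` with `‖μ₁‖, ‖μ₂‖ ≤ 1` and `‖μ‖ = 1` (total variation
norms), then `‖μ₁‖ = ‖μ₂‖ = 1` and the Jordan decompositions combine affinely. -/
theorem jordan_decomposition_affine_on_sphere {K : Type*} [TopologicalSpace K]
    [CompactSpace K] [T2Space K] [MeasurableSpace K] [BorelSpace K]
    (μ μ₁ μ₂ : SignedMeasure K)
    (hreg : μ.totalVariation.Regular) (hreg₁ : μ₁.totalVariation.Regular)
    (hreg₂ : μ₂.totalVariation.Regular)
    (l : ℝ) (hl : l ∈ Set.Ioo (0 : ℝ) 1)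
    (h₁ : μ₁.totalVariation Set.univ ≤ 1) (h₂ : μ₂.totalVariation Set.univ ≤ 1)
    (hμ : μ = (1 - l) • μ₁ + l • μ₂)
    (hnorm : μ.totalVariation Set.univ = 1) :
    μ₁.totalVariation Set.univ = 1 ∧ μ₂.totalVariation Set.univ = 1 ∧
    μ.toJordanDecomposition.posPart
      = ENNReal.ofReal (1 - l) • μ₁.toJordanDecomposition.posPart
        + ENNReal.ofReal l • μ₂.toJordanDecomposition.posPart ∧
    μ.toJordanDecomposition.negPart
      = ENNReal.ofReal (1 - l) • μ₁.toJordanDecomposition.negPart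
        + ENNReal.ofReal l • μ₂.toJordanDecomposition.negPart := by
  obtain ⟨hl0, hl1⟩ := hl
  have hl1' : (0:ℝ) ≤ 1 - l := by linarith
  set νp : Measure K := ENNReal.ofReal (1 - l) • μ₁.toJordanDecomposition.posPart
    + ENNReal.ofReal l • μ₂.toJordanDecomposition.posPart with hνp
  set νn : Measure K := ENNReal.ofReal (1 - l) • μ₁.toJordanDecomposition.negPart
    + ENNReal.ofReal l • μ₂.toJordanDecomposition.negPart with hνn
  have hfin : ∀ (s : SignedMeasure K) (E : Set K),
      s.toJordanDecomposition.posPart E ≠ ⊤ ∧ s.toJordanDecomposition.negPart E ≠ ⊤ :=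
    fun s E => ⟨measure_ne_top _ _, measure_ne_top _ _⟩
  -- abbreviations
  have happ : ∀ (s : SignedMeasure K) (E : Set K), MeasurableSet E →
      s E = (s.toJordanDecomposition.posPart E).toReal
        - (s.toJordanDecomposition.negPart E).toReal := by
    intro s E hE
    conv_lhs => rw [← s.toSignedMeasure_toJordanDecomposition]
    rw [JordanDecomposition.toSignedMeasure, Measure.toSignedMeasure_sub_apply hE]
    rfl
  have hinst1 : IsFiniteMeasure νp := by
    constructor
    rw [hνp]
    simp only [Measure.add_apply, Measure.smul_apply, smul_eq_mul]
    exact ENNReal.add_lt_top.2 ⟨ENNReal.mul_lt_top ENNReal.ofReal_lt_top (measure_lt_top _ _),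
      ENNReal.mul_lt_top ENNReal.ofReal_lt_top (measure_lt_top _ _)⟩
  have hinst2 : IsFiniteMeasure νn := by
    constructor
    rw [hνn]
    simp only [Measure.add_apply, Measure.smul_apply, smul_eq_mul]
    exact ENNReal.add_lt_top.2 ⟨ENNReal.mul_lt_top ENNReal.ofReal_lt_top (measure_lt_top _ _),
      ENNReal.mul_lt_top ENNReal.ofReal_lt_top (measure_lt_top _ _)⟩
  have hrepr : ∀ E, MeasurableSet E → μ E = (νp E).toReal - (νn E).toReal := by
    intro E hE
    have e1 := happ μ₁ E hE
    have e2 := happ μ₂ E hE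
    have : μ E = (1 - l) * μ₁ E + l * μ₂ E := by
      rw [hμ]; simp [VectorMeasure.add_apply, VectorMeasure.smul_apply]
    rw [this, e1, e2, hνp, hνn]
    simp only [Measure.add_apply, Measure.smul_apply, smul_eq_mul]
    rw [ENNReal.toReal_add, ENNReal.toReal_add,
      ENNReal.toReal_mul, ENNReal.toReal_mul, ENNReal.toReal_mul, ENNReal.toReal_mul,
      ENNReal.toReal_ofReal hl1', ENNReal.toReal_ofReal hl0.le]
    · ring
    · exact ENNReal.mul_ne_top ENNReal.ofReal_ne_top (measure_ne_top _ _)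
    · exact ENNReal.mul_ne_top ENNReal.ofReal_ne_top (measure_ne_top _ _)
    · exact ENNReal.mul_ne_top ENNReal.ofReal_ne_top (measure_ne_top _ _)
    · exact ENNReal.mul_ne_top ENNReal.ofReal_ne_top (measure_ne_top _ _)
  have hple : μ.toJordanDecomposition.posPart ≤ νp := posPart_le_of_repr μ νp νn hrepr
  have hnle : μ.toJordanDecomposition.negPart ≤ νn := negPart_le_of_repr μ νp νn hrepr
  -- total variation identity
  have htv : ∀ (s : SignedMeasure K) (E : Set K), s.totalVariation E
      = s.toJordanDecomposition.posPart E + s.toJordanDecomposition.negPart E := by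
    intro s E
    rw [SignedMeasure.totalVariation, Measure.add_apply]
  -- total masses
  have hsum : νp Set.univ + νn Set.univ
      = ENNReal.ofReal (1 - l) * μ₁.totalVariation Set.univ
        + ENNReal.ofReal l * μ₂.totalVariation Set.univ := by
    rw [hνp, hνn, htv, htv]
    simp only [Measure.add_apply, Measure.smul_apply, smul_eq_mul]
    ring
  have hone : ENNReal.ofReal (1 - l) + ENNReal.ofReal l = 1 := by
    rw [← ENNReal.ofReal_add hl1' hl0.le]
    norm_num
  have hub : νp Set.univ + νn Set.univ ≤ 1 := by
    rw [hsum]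
    calc ENNReal.ofReal (1 - l) * μ₁.totalVariation Set.univ
        + ENNReal.ofReal l * μ₂.totalVariation Set.univ
        ≤ ENNReal.ofReal (1 - l) * 1 + ENNReal.ofReal l * 1 :=
          add_le_add (mul_le_mul_right h₁ _) (mul_le_mul_right h₂ _)
      _ = 1 := by rw [mul_one, mul_one, hone]
  have hlb : (1:ENNReal) ≤ νp Set.univ + νn Set.univ := by
    rw [← hnorm, htv]
    exact add_le_add (Measure.le_iff'.1 hple Set.univ) (Measure.le_iff'.1 hnle Set.univ)
  have heq : νp Set.univ + νn Set.univ = 1 := le_antisymm hub hlb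
  -- norms are 1
  have hn1 : μ₁.totalVariation Set.univ = 1 := by
    by_contra hne
    have hlt : μ₁.totalVariation Set.univ < 1 := lt_of_le_of_ne h₁ hne
    have : νp Set.univ + νn Set.univ < 1 := by
      rw [hsum]
      calc ENNReal.ofReal (1 - l) * μ₁.totalVariation Set.univ
          + ENNReal.ofReal l * μ₂.totalVariation Set.univ
          < ENNReal.ofReal (1 - l) * 1 + ENNReal.ofReal l * 1 := by
            refine ENNReal.add_lt_add_of_lt_of_le ?_ ?_ ?_
            · exact ENNReal.mul_ne_top ENNReal.ofReal_ne_top (by simp)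
            · exact ENNReal.mul_lt_mul_iff_right (ENNReal.ofReal_pos.2 (by linarith : (0:ℝ) < 1 - l)).ne' ENNReal.ofReal_ne_top |>.2 hlt
            · exact mul_le_mul_right h₂ _
        _ = 1 := by rw [mul_one, mul_one, hone]
    exact absurd heq this.ne
  have hn2 : μ₂.totalVariation Set.univ = 1 := by
    by_contra hne
    have hlt : μ₂.totalVariation Set.univ < 1 := lt_of_le_of_ne h₂ hne
    have : νp Set.univ + νn Set.univ < 1 := by
      rw [hsum, add_comm]
      calc ENNReal.ofReal l * μ₂.totalVariation Set.univ
          + ENNReal.ofReal (1 - l) * μ₁.totalVariation Set.univ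
          < ENNReal.ofReal l * 1 + ENNReal.ofReal (1 - l) * 1 := by
            refine ENNReal.add_lt_add_of_lt_of_le ?_ ?_ ?_
            · exact ENNReal.mul_ne_top ENNReal.ofReal_ne_top (by simp)
            · exact ENNReal.mul_lt_mul_iff_right (ENNReal.ofReal_pos.2 hl0).ne' ENNReal.ofReal_ne_top |>.2 hlt
            · exact mul_le_mul_right h₁ _
        _ = 1 := by rw [mul_one, mul_one, add_comm, hone]
    exact absurd heq this.ne
  refine ⟨hn1, hn2, ?_, ?_⟩
  -- total masses of pos/neg parts agree
  all_goals {
    have hfinμ : μ.toJordanDecomposition.posPart Set.univ ≠ ⊤ := measure_ne_top _ _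
    have hfinμ' : μ.toJordanDecomposition.negPart Set.univ ≠ ⊤ := measure_ne_top _ _
    have hsum' : μ.toJordanDecomposition.posPart Set.univ
        + μ.toJordanDecomposition.negPart Set.univ = νp Set.univ + νn Set.univ := by
      rw [heq, ← hnorm, htv]
    have hpuniv : μ.toJordanDecomposition.posPart Set.univ = νp Set.univ := by
      by_contra hne
      have hlt : μ.toJordanDecomposition.posPart Set.univ < νp Set.univ :=
        lt_of_le_of_ne (Measure.le_iff'.1 hple Set.univ) hne
      have : μ.toJordanDecomposition.posPart Set.univ
          + μ.toJordanDecomposition.negPart Set.univ < νp Set.univ + νn Set.univ :=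
        ENNReal.add_lt_add_of_lt_of_le hfinμ' hlt (Measure.le_iff'.1 hnle Set.univ)
      exact absurd hsum' this.ne
    have hnuniv : μ.toJordanDecomposition.negPart Set.univ = νn Set.univ := by
      have h' := hsum'
      rw [hpuniv] at h'
      exact (ENNReal.add_right_inj (measure_ne_top νp _)).1 h'
    first
    | · -- posPart
        ext E hE
        by_contra hne
        have hlt : μ.toJordanDecomposition.posPart E < νp E := lt_of_le_of_ne (Measure.le_iff'.1 hple E) hne
        have hlec : μ.toJordanDecomposition.posPart Eᶜ ≤ νp Eᶜ := Measure.le_iff'.1 hple Eᶜ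
        have hsplit1 : μ.toJordanDecomposition.posPart E + μ.toJordanDecomposition.posPart Eᶜ
            = νp E + νp Eᶜ := by
          rw [measure_add_measure_compl hE, measure_add_measure_compl hE, hpuniv]
        have : μ.toJordanDecomposition.posPart E + μ.toJordanDecomposition.posPart Eᶜ
            < νp E + νp Eᶜ :=
          ENNReal.add_lt_add_of_lt_of_le (measure_ne_top _ _) hlt hlec
        exact absurd hsplit1 this.ne
    | · -- negPart
        ext E hE
        by_contra hne
        have hlt : μ.toJordanDecomposition.negPart E < νn E := lt_of_le_of_ne (Measure.le_iff'.1 hnle E) hne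
        have hlec : μ.toJordanDecomposition.negPart Eᶜ ≤ νn Eᶜ := Measure.le_iff'.1 hnle Eᶜ
        have hsplit1 : μ.toJordanDecomposition.negPart E + μ.toJordanDecomposition.negPart Eᶜ
            = νn E + νn Eᶜ := by
          rw [measure_add_measure_compl hE, measure_add_measure_compl hE, hnuniv]
        have : μ.toJordanDecomposition.negPart E + μ.toJordanDecomposition.negPart Eᶜ
            < νn E + νn Eᶜ :=
          ENNReal.add_lt_add_of_lt_of_le (measure_ne_top _ _) hlt hlec
        exact absurd hsplit1 this.ne }
end

section
/- Let K be a compact Hausdorff space and let u, v : K → [0,∞] be lower semicontinuous with inf u ∧ inf v = 0 and u(x) ∨ v(x) = ∞ for all x ∈ K. Define Φ(g) := max( sup_{x∈K}(−u(x) − g(x)), sup_{x∈K}(−v(x) + g(x)) ) for g ∈ C(K). Then Φ is the Legendre–Fenchel transform of the function Ξ on the dual of C(K) given by Ξ(μ) = ∫u dμ⁻ + ∫v dμ⁺ if ‖μ‖ = 1 and +∞ otherwise. -/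
open scoped ENNReal
open MeasureTheory

/-- `Ξ(μ) = ∫u dμ⁻ + ∫v dμ⁺` if `‖μ‖ = 1`, `+∞` otherwise. -/
noncomputable def Xi {K : Type*} [TopologicalSpace K] [MeasurableSpace K]
    (u v : K → ℝ≥0∞) (μ : SignedMeasure K) : ℝ≥0∞ :=
  if μ.totalVariation Set.univ = 1 then
    ∫⁻ x, u x ∂μ.toJordanDecomposition.negPart
      + ∫⁻ x, v x ∂μ.toJordanDecomposition.posPart
  else ⊤

section Aux

variable {K : Type*} [TopologicalSpace K] [CompactSpace K] [T2Space K]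
  [MeasurableSpace K] [BorelSpace K]

lemma ereal_coe_toReal_ennreal (C : ℝ≥0∞) (h : C ≠ ⊤) :
    ((C.toReal : ℝ) : EReal) = (C : EReal) := by
  rw [← EReal.toReal_coe_ennreal (x := C)]
  exact EReal.coe_toReal (by simpa using h) (by simp)

/-- The Jordan decomposition `(δ_x, 0)`. -/
noncomputable def diracPos (x : K) : JordanDecomposition K :=
  ⟨Measure.dirac x, 0, Measure.MutuallySingular.zero_right⟩

/-- The Jordan decomposition `(0, δ_x)`. -/
noncomputable def diracNeg (x : K) : JordanDecomposition K :=
  ⟨0, Measure.dirac x, Measure.MutuallySingular.zero_left⟩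

lemma diracPos_jd (x : K) :
    (diracPos x).toSignedMeasure.toJordanDecomposition = diracPos x :=
  MeasureTheory.JordanDecomposition.toJordanDecomposition_toSignedMeasure _

lemma diracNeg_jd (x : K) :
    (diracNeg x).toSignedMeasure.toJordanDecomposition = diracNeg x :=
  MeasureTheory.JordanDecomposition.toJordanDecomposition_toSignedMeasure _

lemma diracPos_tv (x : K) :
    (diracPos x).toSignedMeasure.totalVariation Set.univ = 1 := by
  rw [SignedMeasure.totalVariation, diracPos_jd]
  simp [diracPos]

lemma diracNeg_tv (x : K) :
    (diracNeg x).toSignedMeasure.totalVariation Set.univ = 1 := by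
  rw [SignedMeasure.totalVariation, diracNeg_jd]
  simp [diracNeg]

end Aux

/-- `Φ(g) = max( sup(−u−g), sup(−v+g) )` is the Legendre–Fenchel transform
of `Ξ`. -/
theorem Phi_eq_legendre_transform_Xi {K : Type*} [TopologicalSpace K]
    [CompactSpace K] [T2Space K] [MeasurableSpace K] [BorelSpace K]
    (u v : K → ℝ≥0∞) (hu : LowerSemicontinuous u) (hv : LowerSemicontinuous v)
    (hinf : (⨅ x, u x) ⊓ (⨅ x, v x) = 0)
    (huv : ∀ x, u x ⊔ v x = ⊤) (g : C(K, ℝ)) :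
    (⨆ μ : SignedMeasure K,
        (((∫ x, g x ∂μ.toJordanDecomposition.posPart
            - ∫ x, g x ∂μ.toJordanDecomposition.negPart : ℝ) : EReal)
          - (Xi u v μ : EReal)))
      = max (⨆ x : K, (-(u x : EReal) - (g x : ℝ)))
            (⨆ x : K, (-(v x : EReal) + (g x : ℝ))) := by
  classical
  have hum : Measurable u := hu.measurable
  have hvm : Measurable v := hv.measurable
  -- K is nonempty
  have hK : Nonempty K := by
    by_contra h
    rw [not_nonempty_iff] at h
    simp [iInf_of_empty] at hinf
  set S1 := ⨆ x : K, (-(u x : EReal) - (g x : ℝ)) with hS1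
  set S2 := ⨆ x : K, (-(v x : EReal) + (g x : ℝ)) with hS2
  -- the max is not ⊥
  have hMbot : max S1 S2 ≠ ⊥ := by
    have h0 : (⨅ x, u x) = 0 ∨ (⨅ x, v x) = 0 := by
      rcases le_total (⨅ x, u x) (⨅ x, v x) with h | h
      · left; rw [← hinf]; exact (inf_eq_left.mpr h).symm
      · right; rw [← hinf]; exact (inf_eq_right.mpr h).symm
    rcases h0 with h0 | h0
    · have : ∃ x, u x ≠ ⊤ := by
        by_contra hc
        push_neg at hc
        simp [hc] at h0
      obtain ⟨x, hx⟩ := this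
      intro hM
      have h1 : S1 = ⊥ := by
        have := le_max_left S1 S2
        rw [hM] at this
        exact le_bot_iff.mp this
      have h2 : (-(u x : EReal) - (g x : ℝ)) ≤ ⊥ :=
        h1 ▸ le_iSup (fun y : K => -(u y : EReal) - ((g y : ℝ) : EReal)) x
      rw [← ereal_coe_toReal_ennreal (u x) hx] at h2
      rw [← EReal.coe_neg, ← EReal.coe_sub] at h2
      exact (EReal.coe_ne_bot _) (le_bot_iff.mp h2)
    · have : ∃ x, v x ≠ ⊤ := by
        by_contra hc
        push_neg at hc
        simp [hc] at h0
      obtain ⟨x, hx⟩ := this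
      intro hM
      have h1 : S2 = ⊥ := by
        have := le_max_right S1 S2
        rw [hM] at this
        exact le_bot_iff.mp this
      have h2 : (-(v x : EReal) + (g x : ℝ)) ≤ ⊥ :=
        h1 ▸ le_iSup (fun y : K => -(v y : EReal) + ((g y : ℝ) : EReal)) x
      rw [← ereal_coe_toReal_ennreal (v x) hx] at h2
      rw [← EReal.coe_neg, ← EReal.coe_add] at h2
      exact (EReal.coe_ne_bot _) (le_bot_iff.mp h2)
  apply le_antisymm
  · -- hard direction: each term is ≤ max S1 S2
    apply iSup_le
    intro μ
    by_cases h1 : μ.totalVariation Set.univ = 1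
    swap
    · rw [Xi, if_neg h1, EReal.coe_ennreal_top, EReal.sub_top]
      exact bot_le
    by_cases h2 : (∫⁻ x, u x ∂μ.toJordanDecomposition.negPart
        + ∫⁻ x, v x ∂μ.toJordanDecomposition.posPart) = ⊤
    · rw [Xi, if_pos h1, h2, EReal.coe_ennreal_top, EReal.sub_top]
      exact bot_le
    -- finite case
    by_cases hMtop : max S1 S2 = ⊤
    · rw [hMtop]; exact le_top
    obtain ⟨r, hr⟩ : ∃ r : ℝ, max S1 S2 = (r : EReal) :=
      ⟨(max S1 S2).toReal, (EReal.coe_toReal hMtop hMbot).symm⟩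
    set mp := μ.toJordanDecomposition.posPart with hmp
    set mn := μ.toJordanDecomposition.negPart with hmn
    have hIU : (∫⁻ x, u x ∂mn) ≠ ⊤ := fun h => h2 (by rw [h, top_add])
    have hIV : (∫⁻ x, v x ∂mp) ≠ ⊤ := fun h => h2 (by rw [h, add_top])
    -- pointwise bounds
    have hb1 : ∀ x : K, u x ≠ ⊤ → -(g x) - (u x).toReal ≤ r := by
      intro x hx
      have h3 : (-(u x : EReal) - (g x : ℝ)) ≤ (r : EReal) := by
        rw [← hr]
        exact le_trans (le_iSup (fun y : K => -(u y : EReal) - ((g y : ℝ) : EReal)) x)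
          (le_max_left S1 S2)
      rw [← ereal_coe_toReal_ennreal (u x) hx, ← EReal.coe_neg, ← EReal.coe_sub,
        EReal.coe_le_coe_iff] at h3
      linarith
    have hb2 : ∀ x : K, v x ≠ ⊤ → g x - (v x).toReal ≤ r := by
      intro x hx
      have h3 : (-(v x : EReal) + (g x : ℝ)) ≤ (r : EReal) := by
        rw [← hr]
        exact le_trans (le_iSup (fun y : K => -(v y : EReal) + ((g y : ℝ) : EReal)) x)
          (le_max_right S1 S2)
      rw [← ereal_coe_toReal_ennreal (v x) hx, ← EReal.coe_neg, ← EReal.coe_add,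
        EReal.coe_le_coe_iff] at h3
      linarith
    -- integrability of g
    have hgi : ∀ (ν : Measure K) [IsFiniteMeasure ν], Integrable (fun x => g x) ν := by
      intro ν _
      exact g.continuous.integrable_of_hasCompactSupport
        (HasCompactSupport.of_compactSpace _)
    have hui : Integrable (fun x => (u x).toReal) mn :=
      integrable_toReal_of_lintegral_ne_top hum.aemeasurable hIU
    have hvi : Integrable (fun x => (v x).toReal) mp :=
      integrable_toReal_of_lintegral_ne_top hvm.aemeasurable hIV
    have huae : ∀ᵐ x ∂mn, u x < ⊤ := ae_lt_top hum hIU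
    have hvae : ∀ᵐ x ∂mp, v x < ⊤ := ae_lt_top hvm hIV
    have hUre : ∫ x, (u x).toReal ∂mn = (∫⁻ x, u x ∂mn).toReal :=
      integral_toReal hum.aemeasurable huae
    have hVre : ∫ x, (v x).toReal ∂mp = (∫⁻ x, v x ∂mp).toReal :=
      integral_toReal hvm.aemeasurable hvae
    -- mass bound
    have hmass : (mp Set.univ).toReal + (mn Set.univ).toReal = 1 := by
      have : mp Set.univ + mn Set.univ = 1 := h1
      have h4 := congrArg ENNReal.toReal this
      rwa [ENNReal.toReal_add (measure_ne_top _ _) (measure_ne_top _ _),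
        ENNReal.toReal_one] at h4
    -- the two integral bounds
    have hI1 : ∫ x, (g x - (v x).toReal) ∂mp ≤ (mp Set.univ).toReal * r := by
      have hint : Integrable (fun x => g x - (v x).toReal) mp := (hgi mp).sub hvi
      calc ∫ x, (g x - (v x).toReal) ∂mp ≤ ∫ _, r ∂mp := by
            apply integral_mono_ae hint (integrable_const r)
            filter_upwards [hvae] with x hx
            exact hb2 x hx.ne
        _ = (mp Set.univ).toReal * r := by rw [integral_const]; simp [smul_eq_mul, Measure.real]
    have hI2 : ∫ x, (-(g x) - (u x).toReal) ∂mn ≤ (mn Set.univ).toReal * r := by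
      have hint : Integrable (fun x => -(g x) - (u x).toReal) mn := ((hgi mn).neg).sub hui
      calc ∫ x, (-(g x) - (u x).toReal) ∂mn ≤ ∫ _, r ∂mn := by
            apply integral_mono_ae hint (integrable_const r)
            filter_upwards [huae] with x hx
            exact hb1 x hx.ne
        _ = (mn Set.univ).toReal * r := by rw [integral_const]; simp [smul_eq_mul, Measure.real]
    -- combine
    have key : (∫ x, g x ∂mp) - (∫ x, g x ∂mn)
        - ((∫⁻ x, u x ∂mn) + (∫⁻ x, v x ∂mp)).toReal ≤ r := by
      rw [ENNReal.toReal_add hIU hIV, ← hUre, ← hVre]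
      have e1 : ∫ x, (g x - (v x).toReal) ∂mp
          = (∫ x, g x ∂mp) - ∫ x, (v x).toReal ∂mp := integral_sub (hgi mp) hvi
      have e2 : ∫ x, (-(g x) - (u x).toReal) ∂mn
          = -((∫ x, g x ∂mn) + ∫ x, (u x).toReal ∂mn) := by
        have hfe : (fun x => -(g x) - (u x).toReal)
            = fun x => -((fun x => g x) x + (fun x => (u x).toReal) x) := by
          funext x; ring
        rw [hfe, integral_neg, integral_add (hgi mn) hui]
      have hsum : (mp Set.univ).toReal * r + (mn Set.univ).toReal * r = r := by
        rw [← add_mul, hmass, one_mul]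
      linarith [hI1, hI2, e1, e2, hsum]
    rw [Xi, if_pos h1, ← hmp, ← hmn, hr]
    rw [← ereal_coe_toReal_ennreal _ h2, ← EReal.coe_sub, EReal.coe_le_coe_iff]
    exact key
  · -- easy direction
    apply max_le
    · apply iSup_le
      intro x
      refine le_iSup_of_le (diracNeg x).toSignedMeasure ?_
      rw [diracNeg_jd, Xi, if_pos (diracNeg_tv x), diracNeg_jd]
      show _ ≤ ((∫ y, g y ∂(0 : Measure K)) - (∫ y, g y ∂(Measure.dirac x)) : ℝ)
        - ((∫⁻ y, u y ∂(Measure.dirac x) + ∫⁻ y, v y ∂(0 : Measure K) : ℝ≥0∞) : EReal)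
      rw [integral_zero_measure, integral_dirac, lintegral_dirac, lintegral_zero_measure,
        add_zero, zero_sub]
      rw [sub_eq_add_neg, sub_eq_add_neg, add_comm]
      simp
    · apply iSup_le
      intro x
      refine le_iSup_of_le (diracPos x).toSignedMeasure ?_
      rw [diracPos_jd, Xi, if_pos (diracPos_tv x), diracPos_jd]
      show _ ≤ ((∫ y, g y ∂(Measure.dirac x)) - (∫ y, g y ∂(0 : Measure K)) : ℝ)
        - ((∫⁻ y, u y ∂(0 : Measure K) + ∫⁻ y, v y ∂(Measure.dirac x) : ℝ≥0∞) : EReal)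
      rw [integral_zero_measure, integral_dirac, lintegral_dirac, lintegral_zero_measure,
        zero_add, sub_zero]
      rw [sub_eq_add_neg, add_comm]
end

section
/- Let D be a compact convex subset of a locally convex Hausdorff topological vector space E, and let f₁, f₂ : D → [0,∞) be upper semicontinuous affine functions. If sup_D (f₁/g) ≤ sup_D (f₂/g) for every continuous real-valued affine function g on E that is positive on D, then f₁ ≤ f₂ on D. -/
open Set
open scoped Classical

private lemma usc_extend_zero {E : Type*} [TopologicalSpace E] {D : Set E}
    (hDc : IsClosed D) {f : E → ℝ} (hf : UpperSemicontinuousOn f D)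
    (hnn : ∀ x ∈ D, 0 ≤ f x) :
    UpperSemicontinuous (fun x => if x ∈ D then f x else 0) := by
  intro x y hy
  by_cases hx : x ∈ D
  · simp only [hx, if_pos] at hy
    have hy0 : 0 < y := lt_of_le_of_lt (hnn x hx) hy
    have h := hf x hx y hy
    rw [eventually_nhdsWithin_iff] at h
    filter_upwards [h] with z hz
    by_cases hzD : z ∈ D
    · simpa [hzD] using hz hzD
    · simpa [hzD] using hy0
  · simp only [hx, if_neg, not_false_iff] at hy
    have : ∀ᶠ z in nhds x, z ∉ D := hDc.isOpen_compl.mem_nhds hx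
    filter_upwards [this] with z hz
    simpa [hz] using hy

private lemma usc_isClosed_hypograph {X : Type*} [TopologicalSpace X] {F : X → ℝ}
    (hF : UpperSemicontinuous F) : IsClosed {p : X × ℝ | p.2 ≤ F p.1} := by
  rw [← isOpen_compl_iff, isOpen_iff_mem_nhds]
  rintro ⟨x, t⟩ h
  simp only [mem_compl_iff, mem_setOf_eq, not_le] at h
  obtain ⟨r, hr1, hr2⟩ := exists_between h
  have h1 : F ⁻¹' Iio r ∈ nhds x := hF x r hr1
  have h2 : (F ⁻¹' Iio r) ×ˢ Ioi r ∈ nhds (x, t) := prod_mem_nhds h1 (Ioi_mem_nhds hr2)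
  refine Filter.mem_of_superset h2 ?_
  rintro ⟨z, s⟩ ⟨hz, hs⟩
  simp only [mem_compl_iff, mem_setOf_eq, not_le]
  exact lt_trans (show F z < r from hz) (show r < s from hs)

private lemma usc_bddAbove {E : Type*} [TopologicalSpace E] {F : E → ℝ}
    (hF : UpperSemicontinuous F) {D : Set E} (hD : IsCompact D) :
    ∃ M : ℝ, ∀ x ∈ D, F x ≤ M := by
  obtain ⟨t, ht⟩ := hD.elim_finite_subcover (fun n : ℕ => F ⁻¹' Iio (n : ℝ))
    (fun n => hF.isOpen_preimage _) (fun x _ => by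
      obtain ⟨n, hn⟩ := exists_nat_gt (F x)
      exact mem_iUnion.2 ⟨n, hn⟩)
  refine ⟨(t.sup id : ℕ), fun x hx => ?_⟩
  obtain ⟨n, hn, hxn⟩ := mem_iUnion₂.1 (ht hx)
  exact le_trans (le_of_lt hxn) (Nat.cast_le.2 (Finset.le_sup (f := id) hn))

/-- If two nonnegative upper semicontinuous affine functions on a compact
convex set satisfy `sup f₁/g ≤ sup f₂/g` for every continuous affine `g`
positive on `D`, then `f₁ ≤ f₂` on `D`. -/
theorem le_of_sup_ratio_le {E : Type*} [AddCommGroup E] [Module ℝ E]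
    [TopologicalSpace E] [IsTopologicalAddGroup E] [ContinuousSMul ℝ E]
    [LocallyConvexSpace ℝ E] [T2Space E]
    (D : Set E) (hD : IsCompact D) (hconv : Convex ℝ D)
    (f₁ f₂ : E → ℝ)
    (h₁usc : UpperSemicontinuousOn f₁ D) (h₂usc : UpperSemicontinuousOn f₂ D)
    (h₁nn : ∀ x ∈ D, 0 ≤ f₁ x) (h₂nn : ∀ x ∈ D, 0 ≤ f₂ x)
    (h₁aff : ∀ x ∈ D, ∀ y ∈ D, ∀ t ∈ Set.Ioo (0 : ℝ) 1,
      f₁ ((1 - t) • x + t • y) = (1 - t) * f₁ x + t * f₁ y)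
    (h₂aff : ∀ x ∈ D, ∀ y ∈ D, ∀ t ∈ Set.Ioo (0 : ℝ) 1,
      f₂ ((1 - t) • x + t • y) = (1 - t) * f₂ x + t * f₂ y)
    (hsup : ∀ g : E →ᴬ[ℝ] ℝ, (∀ x ∈ D, 0 < g x) →
      sSup ((fun x => f₁ x / g x) '' D) ≤ sSup ((fun x => f₂ x / g x) '' D)) :
    ∀ x ∈ D, f₁ x ≤ f₂ x := by
  intro x₀ hx₀
  by_contra hlt
  push_neg at hlt
  have hDc : IsClosed D := hD.isClosed
  -- global usc extension of f₂
  set F : E → ℝ := fun x => if x ∈ D then f₂ x else 0 with hFdef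
  have hFusc : UpperSemicontinuous F := usc_extend_zero hDc h₂usc h₂nn
  have hFD : ∀ x ∈ D, F x = f₂ x := fun x hx => by simp [hFdef, hx]
  -- the truncated hypograph
  set K : Set (E × ℝ) := {p | p.1 ∈ D ∧ 0 ≤ p.2 ∧ p.2 ≤ f₂ p.1} with hKdef
  have hKeq : K = {p : E × ℝ | p.2 ≤ F p.1} ∩ (D ×ˢ Ici 0) := by
    ext ⟨x, t⟩
    simp only [hKdef, mem_inter_iff, mem_setOf_eq, mem_prod, mem_Ici]
    constructor
    · rintro ⟨h1, h2, h3⟩; exact ⟨by rwa [hFD x h1], h1, h2⟩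
    · rintro ⟨h1, h2, h3⟩; exact ⟨h2, h3, by rwa [hFD x h2] at h1⟩
  have hKclosed : IsClosed K := by
    rw [hKeq]
    exact (usc_isClosed_hypograph hFusc).inter (hDc.prod isClosed_Ici)
  have hKcompact : IsCompact K := by
    obtain ⟨M, hM⟩ := usc_bddAbove hFusc hD
    refine (hD.prod (isCompact_Icc (a := (0:ℝ)) (b := M))).of_isClosed_subset hKclosed ?_
    rintro ⟨x, t⟩ ⟨h1, h2, h3⟩
    exact ⟨h1, h2, h3.trans (by rw [← hFD x h1]; exact hM x h1)⟩
  have hKconv : Convex ℝ K := by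
    rintro ⟨x, s⟩ ⟨hx, hs0, hsf⟩ ⟨y, u⟩ ⟨hy, hu0, huf⟩ a b ha hb hab
    rcases eq_or_lt_of_le ha with ha0 | ha0
    · have hb1 : b = 1 := by linarith
      simp only [← ha0, hb1, zero_smul, one_smul, zero_add]
      exact ⟨hy, hu0, huf⟩
    rcases eq_or_lt_of_le hb with hb0 | hb0
    · have ha1 : a = 1 := by linarith
      simp only [← hb0, ha1, zero_smul, one_smul, add_zero]
      exact ⟨hx, hs0, hsf⟩
    have hb1 : b < 1 := by linarith
    have ha' : a = 1 - b := by linarith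
    have hcomb := h₂aff x hx y hy b ⟨hb0, hb1⟩
    refine ⟨hconv hx hy ha hb hab, ?_, ?_⟩
    · show 0 ≤ a * s + b * u
      positivity
    · show a * s + b * u ≤ f₂ (a • x + b • y)
      rw [ha', hcomb]
      have h1 : (1 - b) * s ≤ (1 - b) * f₂ x :=
        mul_le_mul_of_nonneg_left hsf (by linarith)
      have h2 : b * u ≤ b * f₂ y := mul_le_mul_of_nonneg_left huf hb
      linarith
  -- separate (x₀, f₁ x₀) from K
  have hpnotK : (x₀, f₁ x₀) ∉ K := by
    rintro ⟨-, -, h3⟩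
    exact absurd h3 (not_le.2 hlt)
  obtain ⟨φ, u, hφK, hφp⟩ := geometric_hahn_banach_closed_point hKconv hKclosed hpnotK
  set L : E →L[ℝ] ℝ := φ.comp (ContinuousLinearMap.inl ℝ E ℝ) with hLdef
  set c : ℝ := φ (0, 1) with hcdef
  have hφsplit : ∀ x : E, ∀ t : ℝ, φ (x, t) = L x + t * c := by
    intro x t
    have : (x, t) = (x, (0:ℝ)) + t • ((0:E), (1:ℝ)) := by
      simp [Prod.ext_iff]
    rw [this, map_add, map_smul]
    simp [hLdef, hcdef, ContinuousLinearMap.inl_apply, smul_eq_mul]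
  -- basic consequences
  have hLx : ∀ x ∈ D, L x < u := by
    intro x hx
    have := hφK (x, 0) ⟨hx, le_refl 0, h₂nn x hx⟩
    simpa [hφsplit] using this
  have hf₂lt : ∀ x ∈ D, L x + f₂ x * c < u := by
    intro x hx
    have := hφK (x, f₂ x) ⟨hx, h₂nn x hx, le_refl _⟩
    rwa [hφsplit] at this
  have hp : u < L x₀ + f₁ x₀ * c := by rw [← hφsplit]; exact hφp
  have hcpos : 0 < c := by
    have h1 : L x₀ < u := hLx x₀ hx₀
    have h2 : 0 < f₁ x₀ * c := by linarith
    by_contra hc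
    push_neg at hc
    have : f₁ x₀ * c ≤ 0 := mul_nonpos_of_nonneg_of_nonpos (h₁nn x₀ hx₀) hc
    linarith
  -- build the affine map g
  set g : E →ᴬ[ℝ] ℝ := c⁻¹ • (ContinuousAffineMap.const ℝ E u - L.toContinuousAffineMap)
    with hgdef
  have hgval : ∀ x : E, g x = c⁻¹ * (u - L x) := by
    intro x
    simp [hgdef, smul_eq_mul]
  have hgpos : ∀ x ∈ D, 0 < g x := by
    intro x hx
    rw [hgval]
    exact mul_pos (inv_pos.2 hcpos) (by linarith [hLx x hx])
  have hf₂g : ∀ x ∈ D, f₂ x < g x := by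
    intro x hx
    rw [hgval, ← div_eq_inv_mul, lt_div_iff₀ hcpos]
    linarith [hf₂lt x hx]
  have hgf₁ : g x₀ < f₁ x₀ := by
    rw [hgval, ← div_eq_inv_mul, div_lt_iff₀ hcpos]
    linarith
  -- sup of f₂/g is ≤ 1
  have hsup2 : sSup ((fun x => f₂ x / g x) '' D) ≤ 1 := by
    apply Real.sSup_le
    · rintro y ⟨x, hx, rfl⟩
      exact le_of_lt ((div_lt_one (hgpos x hx)).2 (hf₂g x hx))
    · exact zero_le_one
  -- sup of f₁/g is > 1
  have hbdd : BddAbove ((fun x => f₁ x / g x) '' D) := by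
    set F₁ : E → ℝ := fun x => if x ∈ D then f₁ x else 0 with hF₁def
    have hF₁usc : UpperSemicontinuous F₁ := usc_extend_zero hDc h₁usc h₁nn
    obtain ⟨M, hM⟩ := usc_bddAbove hF₁usc hD
    have hM0 : 0 ≤ M := le_trans (by simpa [hF₁def, hx₀] using h₁nn x₀ hx₀)
      (by simpa [hF₁def, hx₀] using hM x₀ hx₀)
    obtain ⟨m, hmD, hmmin⟩ := hD.exists_isMinOn ⟨x₀, hx₀⟩ g.continuous.continuousOn
    have hmpos : 0 < g m := hgpos m hmD
    refine ⟨M / g m, ?_⟩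
    rintro y ⟨x, hx, rfl⟩
    have hf₁M : f₁ x ≤ M := by
      have := hM x hx; simpa [hF₁def, hx] using this
    exact div_le_div₀ hM0 hf₁M hmpos (hmmin hx)
  have hmem : f₁ x₀ / g x₀ ≤ sSup ((fun x => f₁ x / g x) '' D) :=
    le_csSup hbdd ⟨x₀, hx₀, rfl⟩
  have hgt1 : 1 < f₁ x₀ / g x₀ := (one_lt_div (hgpos x₀ hx₀)).2 hgf₁
  have := hsup g hgpos
  linarith
end

section
/- Let K be a compact Hausdorff space and b ∈ C⁺(K) the constant function 1. Let (g_α) be a non-increasing net in C⁺(K) converging pointwise to an upper semicontinuous function g : K → [0,1] with sup g = 1. Then for every h ∈ C⁺(K), the quantity d_R(h, g_α) − d_R(b, g_α) converges to log sup_{x∈K} (g(x)/h(x)), where d_R(h₁,h₂) := log sup_{x∈K} h₂(x)/h₁(x). -/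
open Filter Topology

/-- Generalized Dini theorem: for a non-increasing net of continuous functions on a
compact space converging pointwise to `glim`, the suprema converge to `⨆ x, glim x`. -/
lemma dini_sup_tendsto {ι K : Type*} [Preorder ι] [IsDirected ι (· ≤ ·)] [Nonempty ι]
    [TopologicalSpace K] [CompactSpace K] [Nonempty K]
    (f : ι → K → ℝ) (hcont : ∀ α, Continuous (f α))
    (hmono : ∀ α α' : ι, α ≤ α' → ∀ x, f α' x ≤ f α x)
    (glim : K → ℝ)
    (hlim : ∀ x, Tendsto (fun α => f α x) atTop (𝓝 (glim x))) :
    Tendsto (fun α => ⨆ x, f α x) atTop (𝓝 (⨆ x, glim x)) := by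
  have hbdd : ∀ α, BddAbove (Set.range (f α)) := fun α =>
    Set.image_univ ▸ (isCompact_univ.image (hcont α)).bddAbove
  have hle : ∀ α x, glim x ≤ f α x := fun α x =>
    le_of_tendsto (hlim x) (eventually_atTop.2 ⟨α, fun β hβ => hmono α β hβ x⟩)
  set S : ℝ := ⨆ x, glim x with hS
  have hSle : ∀ α, S ≤ ⨆ x, f α x := fun α =>
    ciSup_mono (hbdd α) (hle α)
  have hanti : ∀ α β, α ≤ β → (⨆ x, f β x) ≤ ⨆ x, f α x := fun α β hαβ =>
    ciSup_mono (hbdd α) (hmono α β hαβ)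
  rw [tendsto_order]
  constructor
  · intro a ha
    exact Eventually.of_forall fun α => lt_of_lt_of_le ha (hSle α)
  · intro a ha
    -- it suffices to find a single α with sup f α < a
    suffices hex : ∃ α, (⨆ x, f α x) < a by
      obtain ⟨α, hα⟩ := hex
      exact eventually_atTop.2 ⟨α, fun β hβ => lt_of_le_of_lt (hanti α β hβ) hα⟩
    by_contra hc
    push_neg at hc
    set a' : ℝ := (S + a) / 2 with ha'
    have hSa' : S < a' := by simp only [ha']; linarith
    have ha'a : a' < a := by simp only [ha']; linarith
    set C : ι → Set K := fun α => {x | a' ≤ f α x} with hC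
    have hCne : ∀ α, (C α).Nonempty := by
      intro α
      obtain ⟨x, hx⟩ := exists_lt_of_lt_ciSup (lt_of_lt_of_le ha'a (hc α))
      exact ⟨x, hx.le⟩
    have hCcl : ∀ α, IsClosed (C α) := fun α =>
      isClosed_le continuous_const (hcont α)
    have hCcp : ∀ α, IsCompact (C α) := fun α => (hCcl α).isCompact
    have hCdir : Directed (· ⊇ ·) C := by
      intro α β
      obtain ⟨γ, hγα, hγβ⟩ := directed_of (· ≤ ·) α β
      exact ⟨γ, fun x hx => le_trans hx (hmono α γ hγα x),
        fun x hx => le_trans hx (hmono β γ hγβ x)⟩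
    obtain ⟨x, hx⟩ := IsCompact.nonempty_iInter_of_directed_nonempty_isCompact_isClosed
      C hCdir hCne hCcp hCcl
    have hx' : ∀ α, a' ≤ f α x := fun α => Set.mem_iInter.1 hx α
    have : a' ≤ glim x := ge_of_tendsto (hlim x) (Eventually.of_forall hx')
    have hbg : BddAbove (Set.range glim) := by
      obtain ⟨α₀⟩ := ‹Nonempty ι›
      exact ⟨⨆ y, f α₀ y, Set.forall_mem_range.2 fun y =>
        (hle α₀ y).trans (le_ciSup (hbdd α₀) y)⟩
    have : a' ≤ S := le_trans this (le_ciSup hbg x)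
    linarith

/-- For a non-increasing net `g_α` in `C⁺(K)` converging pointwise to an upper
semicontinuous `g : K → [0,1]` with `sup g = 1`, for every `h ∈ C⁺(K)` the
quantity `d_R(h, g_α) − d_R(b, g_α)` converges to `log sup_x g(x)/h(x)`. -/
theorem reverse_funk_horofunction_convergence {ι K : Type*} [Preorder ι]
    [IsDirected ι (· ≤ ·)] [Nonempty ι]
    [TopologicalSpace K] [CompactSpace K] [T2Space K] [Nonempty K]
    (g : ι → C(K, ℝ)) (hpos : ∀ α x, 0 < g α x)
    (hmono : ∀ α α' : ι, α ≤ α' → ∀ x, g α' x ≤ g α x)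
    (glim : K → ℝ) (husc : UpperSemicontinuous glim)
    (hrange : ∀ x, 0 ≤ glim x ∧ glim x ≤ 1)
    (hsup : (⨆ x, glim x) = 1)
    (hlim : ∀ x, Tendsto (fun α => g α x) atTop (𝓝 (glim x))) :
    ∀ h : C(K, ℝ), (∀ x, 0 < h x) →
      Tendsto (fun α => Real.log (⨆ x, g α x / h x) - Real.log (⨆ x, g α x))
        atTop (𝓝 (Real.log (⨆ x, glim x / h x))) := by
  intro h hh
  -- convergence of sup g α
  have t1 : Tendsto (fun α => ⨆ x, g α x) atTop (𝓝 (1 : ℝ)) := by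
    have := dini_sup_tendsto (fun α => (g α : K → ℝ)) (fun α => (g α).continuous)
      hmono glim hlim
    rwa [hsup] at this
  -- convergence of sup (g α / h)
  have t2 : Tendsto (fun α => ⨆ x, g α x / h x) atTop (𝓝 (⨆ x, glim x / h x)) :=
    dini_sup_tendsto (fun α x => g α x / h x)
      (fun α => (g α).continuous.div h.continuous fun x => (hh x).ne')
      (fun α β hαβ x => div_le_div_of_nonneg_right (hmono α β hαβ x) (hh x).le)
      (fun x => glim x / h x)
      (fun x => (hlim x).div tendsto_const_nhds (hh x).ne')
  -- positivity of sup (glim / h)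
  have hbddq : BddAbove (Set.range fun x => glim x / h x) := by
    obtain ⟨α₀⟩ := ‹Nonempty ι›
    have hb : BddAbove (Set.range fun x => g α₀ x / h x) :=
      Set.image_univ ▸ (isCompact_univ.image
        ((g α₀).continuous.div h.continuous fun x => (hh x).ne')).bddAbove
    obtain ⟨M, hM⟩ := hb
    refine ⟨M, Set.forall_mem_range.2 fun x => ?_⟩
    have hle : glim x ≤ g α₀ x :=
      le_of_tendsto (hlim x) (eventually_atTop.2 ⟨α₀, fun β hβ => hmono α₀ β hβ x⟩)
    exact le_trans (div_le_div_of_nonneg_right hle (hh x).le) (hM ⟨x, rfl⟩)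
  have hqpos : 0 < ⨆ x, glim x / h x := by
    have h01 : (0 : ℝ) < 1 := one_pos
    rw [← hsup] at h01
    obtain ⟨x, hx⟩ := exists_lt_of_lt_ciSup h01
    have : 0 < glim x / h x := div_pos hx (hh x)
    exact lt_of_lt_of_le this (le_ciSup hbddq x)
  -- combine via continuity of log
  have l1 : Tendsto (fun α => Real.log (⨆ x, g α x)) atTop (𝓝 (Real.log 1)) :=
    ((Real.continuousAt_log one_ne_zero).tendsto).comp t1
  have l2 : Tendsto (fun α => Real.log (⨆ x, g α x / h x)) atTop
      (𝓝 (Real.log (⨆ x, glim x / h x))) :=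
    ((Real.continuousAt_log hqpos.ne').tendsto).comp t2
  have := l2.sub l1
  simpa [Real.log_one] using this
end
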